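/- Let G be a multigraph on vertex set V formed as the superposition of two simple graphs A and B with deg_A(vᵢ) + deg_B(vᵢ) = n - 1 - k for all i, where k ≥ 0. If there is a multiedge between u and v (i.e., uv ∈ A ∩ B), then there exist vertices x and y with: x not adjacent to v in A ∪ B, x adjacent to y in one of A or B by an edge, and u joined to y by strictly fewer parallel edges than x is joined to y; so that switching edges {u,v} and {x,y} to {v,x} and {u,y} in that graph strictly decreases the total number of multiedges. -/

import Mathlib

/-- The edge switch replacing edges `{u,v}` and `{x,y}` by `{v,x}` and `{u,y}` in a
simple graph `H`. -/
def switchGraph {V : Type*} (H : SimpleGraph V) (u v x y : V) : SimpleGraph V :=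
  SimpleGraph.fromEdgeSet ((H.edgeSet \ {s(u, v), s(x, y)}) ∪ {s(v, x), s(u, y)})

/-- The number of parallel edges between `p` and `q` in the superposition of two simple
graphs `A` and `B`. -/
def edgeMult {V : Type*} (A B : SimpleGraph V)
    [DecidableRel A.Adj] [DecidableRel B.Adj] (p q : V) : ℕ :=
  (if A.Adj p q then 1 else 0) + (if B.Adj p q then 1 else 0)

lemma switch_lt {V : Type*} [Fintype V] (H K : SimpleGraph V) (u v x y : V)
    (huv : H.Adj u v) (hKuv : K.Adj u v) (hKvx : ¬ K.Adj v x) (hKuy : ¬ K.Adj u y) :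
    (switchGraph H u v x y ⊓ K).edgeSet.ncard < (H ⊓ K).edgeSet.ncard := by
  have hmem : s(u, v) ∈ (H ⊓ K).edgeSet := by
    rw [SimpleGraph.mem_edgeSet]
    exact ⟨huv, hKuv⟩
  have hfin : (H ⊓ K).edgeSet.Finite := Set.toFinite _
  have hsub : (switchGraph H u v x y ⊓ K).edgeSet ⊆ (H ⊓ K).edgeSet \ {s(u, v)} := by
    intro e he
    rw [SimpleGraph.edgeSet_inf] at he
    obtain ⟨hsw, hK⟩ := he
    rw [switchGraph, SimpleGraph.edgeSet_fromEdgeSet] at hsw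
    obtain ⟨hm, -⟩ := hsw
    rcases hm with ⟨hH, hne⟩ | h
    · constructor
      · rw [SimpleGraph.edgeSet_inf]
        exact ⟨hH, hK⟩
      · intro hc
        exact hne (by simp at hc ⊢; exact Or.inl hc)
    · exfalso
      rcases h with h | h
      · rw [h, SimpleGraph.mem_edgeSet] at hK
        exact hKvx hK
      · simp only [Set.mem_singleton_iff] at h
        rw [h, SimpleGraph.mem_edgeSet] at hK
        exact hKuy hK
  calc (switchGraph H u v x y ⊓ K).edgeSet.ncard
      ≤ ((H ⊓ K).edgeSet \ {s(u, v)}).ncard := Set.ncard_le_ncard hsub hfin.diff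
    _ < (H ⊓ K).edgeSet.ncard := Set.ncard_diff_singleton_lt_of_mem hmem hfin

/-- In the superposition of simple graphs `A`, `B` on `n` vertices with
`deg_A(v) + deg_B(v) = n - 1 - k` for all `v`, if `{u,v}` is a multiedge (an edge of
both `A` and `B`), then there exist vertices `x`, `y` with `x` not adjacent to `v` in
`A ∪ B`, `x` adjacent to `y` in one of `A` or `B`, and `u` joined to `y` by strictly
fewer parallel edges than `x` is; switching `{u,v}`, `{x,y}` to `{v,x}`, `{u,y}` in the
graph containing `{x,y}` strictly decreases the total number of multiedges. -/
theorem multiedge_switch {n k : ℕ} (A B : SimpleGraph (Fin n))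
    (instA : DecidableRel A.Adj) (instB : DecidableRel B.Adj)
    (hdeg : ∀ v, A.degree v + B.degree v = n - 1 - k)
    (u v : Fin n) (hmulti : A.Adj u v ∧ B.Adj u v) :
    ∃ x y : Fin n,
      ¬ (A ⊔ B).Adj x v ∧
      edgeMult A B u y < edgeMult A B x y ∧
      ((A.Adj x y ∧
          (switchGraph A u v x y ⊓ B).edgeSet.ncard < (A ⊓ B).edgeSet.ncard) ∨
       (B.Adj x y ∧
          (A ⊓ switchGraph B u v x y).edgeSet.ncard < (A ⊓ B).edgeSet.ncard)) := by
  obtain ⟨hA, hB⟩ := hmulti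
  have hn : 0 < n := Fin.pos u
  -- find x not adjacent to v
  set NA := A.neighborFinset v with hNA
  set NB := B.neighborFinset v with hNB
  have huNA : u ∈ NA := by simp [hNA, hA.symm]
  have huNB : u ∈ NB := by simp [hNB, hB.symm]
  have hinter : 1 ≤ (NA ∩ NB).card :=
    Finset.card_pos.mpr ⟨u, Finset.mem_inter.mpr ⟨huNA, huNB⟩⟩
  have hunion : (NA ∪ NB).card + (NA ∩ NB).card = NA.card + NB.card :=
    Finset.card_union_add_card_inter NA NB
  have hdegv : NA.card + NB.card = n - 1 - k := hdeg v
  have hvnot : v ∉ NA ∪ NB := by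
    simp [hNA, hNB, SimpleGraph.irrefl]
  have hcard : (insert v (NA ∪ NB)).card < n := by
    rw [Finset.card_insert_of_notMem hvnot]
    omega
  have hex : ∃ x, x ∉ insert v (NA ∪ NB) := by
    by_contra hc
    push_neg at hc
    have := Finset.card_le_card (fun z _ => hc z : (Finset.univ : Finset (Fin n)) ⊆ _)
    simp at this
    omega
  obtain ⟨x, hx⟩ := hex
  simp only [Finset.mem_insert, Finset.mem_union, hNA, hNB,
    SimpleGraph.mem_neighborFinset] at hx
  push_neg at hx
  obtain ⟨hxv, hxA, hxB⟩ := hx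
  have hxadj : ¬ (A ⊔ B).Adj x v := by
    simp only [SimpleGraph.sup_adj]
    push_neg
    exact ⟨fun h => hxA h.symm, fun h => hxB h.symm⟩
  -- degree sums
  have hsum : ∀ p : Fin n, ∑ w, edgeMult A B p w = A.degree p + B.degree p := by
    intro p
    simp only [edgeMult, Finset.sum_add_distrib]
    congr 1 <;>
      rw [SimpleGraph.degree, SimpleGraph.neighborFinset_eq_filter, Finset.card_filter]
  -- find y
  have hey : ∃ y, edgeMult A B u y < edgeMult A B x y := by
    by_contra hc
    push_neg at hc
    have hlt : ∑ w, edgeMult A B x w < ∑ w, edgeMult A B u w := by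
      apply Finset.sum_lt_sum (fun i _ => hc i)
      refine ⟨v, Finset.mem_univ v, ?_⟩
      simp only [edgeMult]
      rw [if_pos hA, if_pos hB, if_neg (fun h => hxA h.symm), if_neg (fun h => hxB h.symm)]
      omega
    rw [hsum, hsum, hdeg, hdeg] at hlt
    omega
  obtain ⟨y, hy⟩ := hey
  refine ⟨x, y, hxadj, hy, ?_⟩
  have hBvx : ¬ B.Adj v x := hxB
  have hAvx : ¬ A.Adj v x := hxA
  by_cases hcase : A.Adj x y ∧ ¬ B.Adj u y
  · exact Or.inl ⟨hcase.1, switch_lt A B u v x y hA hB hBvx hcase.2⟩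
  · have hc2 : B.Adj x y ∧ ¬ A.Adj u y := by
      simp only [edgeMult] at hy
      by_cases h1 : A.Adj x y <;> by_cases h2 : B.Adj x y <;>
        by_cases h3 : A.Adj u y <;> by_cases h4 : B.Adj u y <;>
        simp_all
    refine Or.inr ⟨hc2.1, ?_⟩
    have heq : (A ⊓ switchGraph B u v x y).edgeSet = (switchGraph B u v x y ⊓ A).edgeSet := by
      rw [inf_comm]
    have heq2 : (A ⊓ B).edgeSet = (B ⊓ A).edgeSet := by rw [inf_comm]
    rw [heq, heq2]
    exact switch_lt B A u v x y hB hA hAvx hc2.2
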